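/- Let n = (2r+1)p with p ≥ 1. If p is even, the minimum size of an r-identifying code of the path P_n is (2r+1)p/2 + 1; if p is odd, it is (2r+1)(p-1)/2 + 2r. -/

import Mathlib

/-- `Dr G r D x` = `N_r[x] ∩ D`. -/
def Dr {V : Type*} (G : SimpleGraph V) (r : ℕ) (D : Set V) (x : V) : Set V :=
  {y | y ∈ D ∧ G.dist x y ≤ r}

/-- `D` is an `r`-identifying code of `G`. -/
def IsIdCode {V : Type*} (G : SimpleGraph V) (r : ℕ) (D : Set V) : Prop :=
  (∀ x, (Dr G r D x).Nonempty) ∧ ∀ x y, x ≠ y → Dr G r D x ≠ Dr G r D y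

/-- `D` is an `r`-locating-dominating set of `G`. -/
def IsLD {V : Type*} (G : SimpleGraph V) (r : ℕ) (D : Set V) : Prop :=
  (∀ x ∉ D, (Dr G r D x).Nonempty) ∧
    ∀ x ∉ D, ∀ y ∉ D, x ≠ y → Dr G r D x ≠ Dr G r D y

/-- The cycle graph on `ZMod n`. -/
def cycleG (n : ℕ) : SimpleGraph (ZMod n) :=
  SimpleGraph.fromRel (fun x y => x - y = 1)


open SimpleGraph Finset

set_option linter.unusedSectionVars false

section Helpers

attribute [local instance] Classical.propDecidable


lemma pg_walk_le {n : ℕ} (u v : Fin n) (w : (pathGraph n).Walk u v) :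
    (u.val - v.val) + (v.val - u.val) ≤ w.length := by
  induction w with
  | nil => simp
  | cons h w ih =>
    rw [pathGraph_adj] at h
    rw [SimpleGraph.Walk.length_cons]
    omega

lemma pg_walk_ex {n : ℕ} (k : ℕ) : ∀ (u v : Fin n), v.val = u.val + k →
    ∃ w : (pathGraph n).Walk u v, w.length = k := by
  induction k with
  | zero =>
    intro u v h; have : u = v := Fin.ext (by omega)
    subst this; exact ⟨SimpleGraph.Walk.nil, rfl⟩
  | succ k ih =>
    intro u v h
    have hu1 : u.val + 1 < n := by have := v.isLt; omega
    set u' : Fin n := ⟨u.val + 1, hu1⟩ with hu'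
    have hadj : (pathGraph n).Adj u u' := by rw [pathGraph_adj]; left; rfl
    obtain ⟨w, hw⟩ := ih u' v (by simp [hu']; omega)
    exact ⟨SimpleGraph.Walk.cons hadj w, by simp [hw]⟩

lemma pathGraph_dist {n : ℕ} (u v : Fin n) :
    (pathGraph n).dist u v = (u.val - v.val) + (v.val - u.val) := by
  rcases le_total u.val v.val with h | h
  · obtain ⟨w, hw⟩ := pg_walk_ex (v.val - u.val) u v (by omega)
    have h1 := SimpleGraph.dist_le w
    have h2 : (pathGraph n).Reachable u v := ⟨w⟩
    obtain ⟨w', hw'⟩ := h2.exists_walk_length_eq_dist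
    have := pg_walk_le u v w'
    omega
  · obtain ⟨w, hw⟩ := pg_walk_ex (u.val - v.val) v u (by omega)
    have h1 := SimpleGraph.dist_le w
    rw [SimpleGraph.dist_comm] at h1
    have h2 : (pathGraph n).Reachable u v := ⟨w.reverse⟩
    obtain ⟨w', hw'⟩ := h2.exists_walk_length_eq_dist
    have := pg_walk_le u v w'
    omega

lemma mem_Dr {n r : ℕ} {D : Set (Fin n)} {x c : Fin n} :
    c ∈ Dr (pathGraph n) r D x ↔ c ∈ D ∧ (x.val - c.val) + (c.val - x.val) ≤ r := by
  rw [Dr, Set.mem_setOf_eq, pathGraph_dist]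

lemma suffic {r n : ℕ} (hr : 1 ≤ r) (hn : 2*r+1 ≤ n) (D : Set (Fin n))
    (S1 : ∀ x : Fin n, ∃ c ∈ D, (x.val - c.val) + (c.val - x.val) ≤ r)
    (S2 : ∀ j : ℕ, j + 2*r + 2 ≤ n → (∃ c ∈ D, c.val = j) ∨ (∃ c ∈ D, c.val = j + (2*r+1)))
    (S3 : ∀ s : ℕ, (r+1 ≤ s ∧ s ≤ 2*r) ∨ (n-(2*r+1) ≤ s ∧ s + r + 2 ≤ n) → ∃ c ∈ D, c.val = s)
    (S4 : ∃ c ∈ D, c.val = 2*r) :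
    IsIdCode (pathGraph n) r D := by
  have key : ∀ x y : Fin n, x.val < y.val →
      Dr (pathGraph n) r D x = Dr (pathGraph n) r D y → False := by
    intro x y hxy heq
    have hyn : y.val < n := y.isLt
    -- first, y - x ≤ 2r
    obtain ⟨c0, hc0D, hc0b⟩ := S1 x
    have hc0y : ((pathGraph n).dist y c0) ≤ r := by
      have := (Set.ext_iff.mp heq c0).mp (mem_Dr.mpr ⟨hc0D, hc0b⟩)
      exact this.2
    rw [pathGraph_dist] at hc0y
    have hd : y.val ≤ x.val + 2*r := by omega
    have contra : ∀ c : Fin n, c ∈ D →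
        ¬ (((x.val - c.val) + (c.val - x.val) ≤ r) ↔ ((y.val - c.val) + (c.val - y.val) ≤ r)) → False := by
      intro c hcD hiff
      have h1 := Set.ext_iff.mp heq c
      rw [mem_Dr, mem_Dr] at h1
      refine hiff ⟨fun h => (h1.mp ⟨hcD, h⟩).2, fun h => (h1.mpr ⟨hcD, h⟩).2⟩
    by_cases hyr : y.val ≤ r
    · -- case B
      obtain ⟨c, hcD, hcv⟩ := S3 (x.val + r + 1) (by left; omega)
      exact contra c hcD (by omega)
    · by_cases hyrn : y.val + r + 1 ≤ n
      · -- case A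
        rcases S2 (y.val - r - 1) (by omega) with ⟨c, hcD, hcv⟩ | ⟨c, hcD, hcv⟩
        · exact contra c hcD (by omega)
        · exact contra c hcD (by omega)
      · by_cases hx1 : n ≤ x.val + r + 1
        · -- case C1
          obtain ⟨c, hcD, hcv⟩ := S3 (x.val - r) (by right; omega)
          exact contra c hcD (by omega)
        · by_cases hxr : x.val < r
          · -- case C2a
            obtain ⟨c, hcD, hcv⟩ := S4
            exact contra c hcD (by omega)
          · -- case C2b
            rcases S2 (x.val - r) (by omega) with ⟨c, hcD, hcv⟩ | ⟨c, hcD, hcv⟩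
            · exact contra c hcD (by omega)
            · exact contra c hcD (by omega)
  constructor
  · intro x
    obtain ⟨c, hcD, hc⟩ := S1 x
    exact ⟨c, mem_Dr.mpr ⟨hcD, hc⟩⟩
  · intro x y hxy heq
    rcases Nat.lt_trichotomy x.val y.val with h | h | h
    · exact key x y h heq
    · exact hxy (Fin.ext h)
    · exact key y x h heq.symm


-- matching/injection helper
lemma inj_helper {T : Finset ℕ} {k : ℕ} (a : ℕ) (f : ℕ → ℕ)
    (hf : ∀ j ∈ range k, f j ∈ T ∧ (f j = 2*j + a ∨ f j = 2*j+1 + a)) :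
    k ≤ T.card := by
  have : (range k).card ≤ T.card := by
    apply Finset.card_le_card_of_injOn f (fun j hj => (hf j hj).1)
    intro j1 h1 j2 h2 he
    have := (hf j1 (mem_coe.mp h1)).2
    have := (hf j2 (mem_coe.mp h2)).2
    omega
  simpa using this

lemma CL1 {p : ℕ} {T : Finset ℕ}
    (cover : ∀ i, i+1 < p → i ∈ T ∨ i+1 ∈ T) : p/2 ≤ T.card := by
  apply inj_helper 0 (fun j => if 2*j ∈ T then 2*j else 2*j+1)
  intro j hj
  rw [mem_range] at hj
  have := cover (2*j) (by omega)
  constructor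
  · split <;> simp_all
  · split <;> omega

lemma CL2 {p : ℕ} {T : Finset ℕ} (hodd : Odd p) (h0 : 0 ∈ T)
    (cover : ∀ i, i+1 < p → i ∈ T ∨ i+1 ∈ T) : (p-1)/2 + 1 ≤ T.card := by
  have h1 : (p-1)/2 ≤ (T.erase 0).card := by
    apply inj_helper 1 (fun j => if 2*j+1 ∈ T then 2*j+1 else 2*j+2)
    intro j hj
    rw [mem_range] at hj
    obtain ⟨u, hu⟩ := hodd
    have := cover (2*j+1) (by omega)
    constructor
    · rcases this with h | h
      · rw [if_pos h, mem_erase]; exact ⟨by omega, h⟩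
      · by_cases h' : 2*j+1 ∈ T
        · rw [if_pos h', mem_erase]; exact ⟨by omega, h'⟩
        · rw [if_neg h', mem_erase]; exact ⟨by omega, h⟩
    · split <;> omega
  have := Finset.card_erase_of_mem h0
  have := Finset.card_pos.mpr ⟨0, h0⟩
  omega

lemma CL2' {p : ℕ} {T : Finset ℕ} (hodd : Odd p) (hl : p - 1 ∈ T)
    (cover : ∀ i, i+1 < p → i ∈ T ∨ i+1 ∈ T) : (p-1)/2 + 1 ≤ T.card := by
  have h1 : (p-1)/2 ≤ (T.erase (p-1)).card := by
    apply inj_helper 0 (fun j => if 2*j ∈ T then 2*j else 2*j+1)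
    intro j hj
    rw [mem_range] at hj
    obtain ⟨u, hu⟩ := hodd
    have := cover (2*j) (by omega)
    constructor
    · rcases this with h | h
      · rw [if_pos h, mem_erase]; exact ⟨by omega, h⟩
      · by_cases h' : 2*j ∈ T
        · rw [if_pos h', mem_erase]; exact ⟨by omega, h'⟩
        · rw [if_neg h', mem_erase]; exact ⟨by omega, h⟩
    · split <;> omega
  have := Finset.card_erase_of_mem hl
  have := Finset.card_pos.mpr ⟨p-1, hl⟩
  omega

lemma CL3 {p : ℕ} {T : Finset ℕ} (heven : Even p) (hp : 1 ≤ p) (h0 : 0 ∈ T) (hl : p - 1 ∈ T)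
    (cover : ∀ i, i+1 < p → i ∈ T ∨ i+1 ∈ T) : p/2 + 1 ≤ T.card := by
  obtain ⟨u, hu⟩ := heven
  have h1 : (p-2)/2 ≤ ((T.erase 0).erase (p-1)).card := by
    apply inj_helper 1 (fun j => if 2*j+1 ∈ T then 2*j+1 else 2*j+2)
    intro j hj
    rw [mem_range] at hj
    have := cover (2*j+1) (by omega)
    constructor
    · rcases this with h | h
      · rw [if_pos h, mem_erase, mem_erase]; exact ⟨by omega, by omega, h⟩
      · by_cases h' : 2*j+1 ∈ T
        · rw [if_pos h', mem_erase, mem_erase]; exact ⟨by omega, by omega, h'⟩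
        · rw [if_neg h', mem_erase, mem_erase]; exact ⟨by omega, by omega, h⟩
    · split <;> omega
  have hmem : p - 1 ∈ T.erase 0 := by rw [mem_erase]; exact ⟨by omega, hl⟩
  have := Finset.card_erase_of_mem hmem
  have := Finset.card_erase_of_mem h0
  have := Finset.card_pos.mpr ⟨0, h0⟩
  have := Finset.card_pos.mpr ⟨p-1, hmem⟩
  omega

lemma part_card {m p : ℕ} (hm : 0 < m) (S : Finset ℕ) (hS : S ⊆ range (m*p)) :
    S.card = ∑ s ∈ range m, ((range p).filter (fun i => s + i*m ∈ S)).card := by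
  have h1 : S.card = ∑ c ∈ range (m*p), (if c ∈ S then 1 else 0) := by
    rw [← Finset.card_filter]
    congr 1
    rw [Finset.filter_mem_eq_inter, Finset.inter_eq_right.mpr hS]
  rw [h1]
  simp_rw [Finset.card_filter]
  rw [← Finset.sum_product']
  symm
  apply Finset.sum_nbij' (i := fun sc : ℕ × ℕ => sc.1 + sc.2 * m)
    (j := fun c => (c % m, c / m))
  · intro sc hsc
    rw [Finset.mem_product, mem_range, mem_range] at hsc
    rw [mem_range]
    calc sc.1 + sc.2 * m < m + sc.2 * m := by omega
    _ = (sc.2 + 1) * m := by ring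
    _ ≤ p * m := Nat.mul_le_mul_right m (by omega)
    _ = m * p := Nat.mul_comm p m
  · intro c hc
    rw [mem_range] at hc
    rw [Finset.mem_product, mem_range, mem_range]
    exact ⟨Nat.mod_lt c hm, Nat.div_lt_of_lt_mul hc⟩
  · intro sc hsc
    rw [Finset.mem_product, mem_range, mem_range] at hsc
    have h2 : (sc.1 + sc.2 * m) % m = sc.1 := by
      rw [Nat.add_mul_mod_self_right, Nat.mod_eq_of_lt hsc.1]
    have h3 : (sc.1 + sc.2 * m) / m = sc.2 := by
      rw [Nat.add_mul_div_right _ _ hm, Nat.div_eq_of_lt hsc.1]; omega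
    simp [h2, h3]
  · intro c hc
    simp [Nat.mod_add_div']
  · intro sc hsc
    rfl

lemma necc {n r : ℕ} {D : Set (Fin n)} (hD : IsIdCode (pathGraph n) r D)
    (x y : Fin n) (hxy : x ≠ y) :
    ∃ c ∈ D, ¬(((x.val - c.val) + (c.val - x.val) ≤ r) ↔
      ((y.val - c.val) + (c.val - y.val) ≤ r)) := by
  have hne := hD.2 x y hxy
  have h : ¬ ∀ c, (c ∈ Dr (pathGraph n) r D x ↔ c ∈ Dr (pathGraph n) r D y) :=
    fun h => hne (Set.ext h)
  push_neg at h
  obtain ⟨c, hc⟩ := h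
  rw [mem_Dr, mem_Dr] at hc
  by_cases hcD : c ∈ D
  · exact ⟨c, hcD, by tauto⟩
  · exfalso; tauto

lemma ball_ne {n r : ℕ} {D : Set (Fin n)} (hD : IsIdCode (pathGraph n) r D)
    (x : Fin n) : ∃ c ∈ D, (x.val - c.val) + (c.val - x.val) ≤ r := by
  obtain ⟨c, hc⟩ := hD.1 x
  rw [mem_Dr] at hc
  exact ⟨c, hc.1, hc.2⟩

section Lower
variable {r p : ℕ} (hr : 1 ≤ r) (hp : 1 ≤ p) {D : Set (Fin ((2*r+1)*p))}
  (hD : IsIdCode (pathGraph ((2*r+1)*p)) r D)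

attribute [local instance] Classical.propDecidable

/-- common setup packaged: the trace finset -/
noncomputable def traceS (r p : ℕ) (D : Set (Fin ((2*r+1)*p))) : Finset ℕ :=
  (range ((2*r+1)*p)).filter (fun c => ∃ h : c < (2*r+1)*p, (⟨c, h⟩ : Fin ((2*r+1)*p)) ∈ D)

noncomputable def traceT (r p : ℕ) (D : Set (Fin ((2*r+1)*p))) (s : ℕ) : Finset ℕ :=
  (range p).filter (fun i => s + i*(2*r+1) ∈ traceS r p D)

lemma mem_traceS {r p : ℕ} {D : Set (Fin ((2*r+1)*p))} (c : Fin ((2*r+1)*p)) :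
    c.val ∈ traceS r p D ↔ c ∈ D := by
  rw [traceS, mem_filter]
  constructor
  · rintro ⟨-, h, hmem⟩
    rwa [Fin.eta] at hmem
  · intro h
    exact ⟨mem_range.mpr c.isLt, c.isLt, by rwa [Fin.eta]⟩

lemma mem_traceS' {r p : ℕ} {D : Set (Fin ((2*r+1)*p))} {c : ℕ} (hc : c ∈ traceS r p D) :
    ∃ cc : Fin ((2*r+1)*p), cc ∈ D ∧ cc.val = c := by
  rw [traceS, mem_filter] at hc
  obtain ⟨-, h, hmem⟩ := hc
  exact ⟨⟨c, h⟩, hmem, rfl⟩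

lemma ncard_eq_traceS {r p : ℕ} (D : Set (Fin ((2*r+1)*p))) :
    D.ncard = (traceS r p D).card := by
  classical
  rw [Set.ncard_eq_toFinset_card' D]
  apply Finset.card_bij (fun a _ => a.val)
  · intro a ha
    rw [Set.mem_toFinset] at ha
    exact (mem_traceS a).mpr ha
  · intro a _ b _ h
    exact Fin.ext h
  · intro b hb
    obtain ⟨cc, hcc, hv⟩ := mem_traceS' hb
    exact ⟨cc, by rwa [Set.mem_toFinset], hv⟩

include hr hp hD in
lemma trace_sum : (traceS r p D).card = ∑ s ∈ range (2*r+1), (traceT r p D s).card := by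
  simp only [traceT]
  exact part_card (by omega) _ (by rw [traceS]; exact filter_subset _ _)

lemma mem_traceT {r p : ℕ} {D : Set (Fin ((2*r+1)*p))} {s i : ℕ} :
    i ∈ traceT r p D s ↔ (i < p ∧ s + i*(2*r+1) ∈ traceS r p D) := by
  rw [traceT, mem_filter, mem_range]

include hr hD in
lemma trace_cover {s : ℕ} (hs : s < 2*r+1) :
    ∀ i, i + 1 < p → i ∈ traceT r p D s ∨ i + 1 ∈ traceT r p D s := by
  intro i hip
  have e : (i+2)*(2*r+1) = i*(2*r+1) + 2*(2*r+1) := by ring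
  have e' : (i+1)*(2*r+1) = i*(2*r+1) + (2*r+1) := by ring
  have hle : (i+2)*(2*r+1) ≤ p*(2*r+1) := Nat.mul_le_mul_right _ (by omega)
  have hpm : p*(2*r+1) = (2*r+1)*p := Nat.mul_comm _ _
  have hx : s + i*(2*r+1) + r < (2*r+1)*p := by omega
  have hy : s + i*(2*r+1) + r + 1 < (2*r+1)*p := by omega
  obtain ⟨c, hcD, hc⟩ := necc hD ⟨s + i*(2*r+1) + r, hx⟩ ⟨s + i*(2*r+1) + r + 1, hy⟩
    (by apply Fin.ne_of_val_ne; simp)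
  simp only [Fin.val_mk] at hc
  have hcS : c.val ∈ traceS r p D := (mem_traceS c).mpr hcD
  have : c.val = s + i*(2*r+1) ∨ c.val = s + i*(2*r+1) + (2*r+1) := by omega
  rcases this with h | h
  · left; rw [mem_traceT]; exact ⟨by omega, by rwa [← h]⟩
  · right; rw [mem_traceT]
    refine ⟨by omega, ?_⟩
    rw [e']
    have : s + (i*(2*r+1) + (2*r+1)) = c.val := by omega
    rwa [this]

include hr hp hD in
lemma trace_force1 {s : ℕ} (h1 : r + 1 ≤ s) (h2 : s ≤ 2*r) : 0 ∈ traceT r p D s := by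
  have hn : 2*r+1 ≤ (2*r+1)*p := Nat.le_mul_of_pos_right _ (by omega)
  have hx : s - r - 1 < (2*r+1)*p := by omega
  have hy : s - r < (2*r+1)*p := by omega
  obtain ⟨c, hcD, hc⟩ := necc hD ⟨s - r - 1, hx⟩ ⟨s - r, hy⟩
    (by apply Fin.ne_of_val_ne; simp; omega)
  simp only [Fin.val_mk] at hc
  have hcv : c.val = s := by omega
  have hcS : c.val ∈ traceS r p D := (mem_traceS c).mpr hcD
  rw [mem_traceT]
  refine ⟨by omega, ?_⟩
  have : s + 0*(2*r+1) = c.val := by omega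
  rwa [this]

include hr hp hD in
lemma trace_force2 {s : ℕ} (h1 : s < r) : p - 1 ∈ traceT r p D s := by
  have e1 : (p-1)*(2*r+1) + (2*r+1) = (2*r+1)*p := by
    cases p with
    | zero => omega
    | succ q => simp only [Nat.add_sub_cancel]; ring
  have hx : s + (p-1)*(2*r+1) + r < (2*r+1)*p := by omega
  have hy : s + (p-1)*(2*r+1) + r + 1 < (2*r+1)*p := by omega
  obtain ⟨c, hcD, hc⟩ := necc hD ⟨s + (p-1)*(2*r+1) + r, hx⟩ ⟨s + (p-1)*(2*r+1) + r + 1, hy⟩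
    (by apply Fin.ne_of_val_ne; simp)
  simp only [Fin.val_mk] at hc
  have hcn := c.isLt
  have hcv : c.val = s + (p-1)*(2*r+1) := by omega
  have hcS : c.val ∈ traceS r p D := (mem_traceS c).mpr hcD
  rw [mem_traceT]
  exact ⟨by omega, by rwa [← hcv]⟩

include hr hp hD in
lemma trace_ball0 : ∃ s, s ≤ r ∧ 0 ∈ traceT r p D s := by
  have h0 : (0:ℕ) < (2*r+1)*p := by positivity
  obtain ⟨c, hcD, hc⟩ := ball_ne hD ⟨0, h0⟩
  simp only [Fin.val_mk] at hc
  refine ⟨c.val, by omega, ?_⟩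
  rw [mem_traceT]
  refine ⟨by omega, ?_⟩
  have : c.val + 0*(2*r+1) = c.val := by omega
  rw [this]
  exact (mem_traceS c).mpr hcD

include hr hp hD in
lemma trace_balln : ∃ s, r ≤ s ∧ s ≤ 2*r ∧ p - 1 ∈ traceT r p D s := by
  have e1 : (p-1)*(2*r+1) + (2*r+1) = (2*r+1)*p := by
    cases p with
    | zero => omega
    | succ q => simp only [Nat.add_sub_cancel]; ring
  have h0 : (2*r+1)*p - 1 < (2*r+1)*p := by omega
  obtain ⟨c, hcD, hc⟩ := ball_ne hD ⟨(2*r+1)*p - 1, h0⟩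
  simp only [Fin.val_mk] at hc
  have hcn := c.isLt
  refine ⟨c.val - (p-1)*(2*r+1), by omega, by omega, ?_⟩
  rw [mem_traceT]
  refine ⟨by omega, ?_⟩
  have : c.val - (p-1)*(2*r+1) + (p-1)*(2*r+1) = c.val := by omega
  rw [this]
  exact (mem_traceS c).mpr hcD

include hr hp hD in
lemma lower_even (hpe : Even p) : (2*r+1)*p/2 + 1 ≤ D.ncard := by
  obtain ⟨u, hu⟩ := hpe
  have hu1 : 1 ≤ u := by omega
  have hgoal : (2*r+1)*p/2 = (2*r+1)*u := by
    rw [show (2*r+1)*p = ((2*r+1)*u)*2 by rw [hu]; ring]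
    exact Nat.mul_div_cancel _ (by norm_num)
  rw [hgoal, ncard_eq_traceS]
  by_contra hcon
  push_neg at hcon
  have hsum := trace_sum hr hp hD
  have hcards : ∀ s ∈ range (2*r+1), (traceT r p D s).card = u := by
    by_contra hne
    push_neg at hne
    obtain ⟨s0, hs0, hs0ne⟩ := hne
    have hlow : ∀ s ∈ range (2*r+1), u ≤ (traceT r p D s).card := by
      intro s hs
      have := CL1 (p := p) (trace_cover hr hD (mem_range.mp hs))
      omega
    have hlt : ∑ s ∈ range (2*r+1), u < ∑ s ∈ range (2*r+1), (traceT r p D s).card :=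
      Finset.sum_lt_sum hlow ⟨s0, hs0, by have := hlow s0 hs0; omega⟩
    rw [Finset.sum_const, card_range, smul_eq_mul] at hlt
    omega
  have covlem : ∀ s, s < 2*r+1 → 0 ∈ traceT r p D s → p - 1 ∈ traceT r p D s → False := by
    intro s hs h0 hl
    have := CL3 (by exact ⟨u, hu⟩) hp h0 hl (trace_cover hr hD hs)
    have := hcards s (mem_range.mpr hs)
    omega
  obtain ⟨s0, hs0r, h0T⟩ := trace_ball0 hr hp hD
  have hs0 : s0 = r := by
    by_contra h
    exact covlem s0 (by omega) h0T (trace_force2 hr hp hD (by omega))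
  obtain ⟨s1, hs1a, hs1b, hpT⟩ := trace_balln hr hp hD
  have hs1 : s1 = r := by
    by_contra h
    exact covlem s1 (by omega) (trace_force1 hr hp hD (by omega) hs1b) hpT
  exact covlem r (by omega) (hs0 ▸ h0T) (hs1 ▸ hpT)

include hr hp hD in
lemma lower_odd (hpo : Odd p) : (2*r+1)*(p-1)/2 + 2*r ≤ D.ncard := by
  obtain ⟨w, hw⟩ := hpo
  have hgoal : (2*r+1)*(p-1)/2 = (2*r+1)*w := by
    rw [show (2*r+1)*(p-1) = ((2*r+1)*w)*2 by rw [show p - 1 = 2*w by omega]; ring]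
    exact Nat.mul_div_cancel _ (by norm_num)
  rw [hgoal, ncard_eq_traceS]
  have hsum := trace_sum hr hp hD
  have hbound : ∀ s ∈ range (2*r+1),
      (if s = r then w else w + 1) ≤ (traceT r p D s).card := by
    intro s hs
    rw [mem_range] at hs
    by_cases hsr : s = r
    · rw [if_pos hsr]
      have := CL1 (p := p) (trace_cover hr hD hs)
      omega
    · rw [if_neg hsr]
      rcases Nat.lt_or_ge s r with h | h
      · have := CL2' ⟨w, hw⟩ (trace_force2 hr hp hD h) (trace_cover hr hD hs)
        omega
      · have := CL2 ⟨w, hw⟩ (trace_force1 hr hp hD (by omega) (by omega))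
          (trace_cover hr hD hs)
        omega
  have hsb : ∑ s ∈ range (2*r+1), (if s = r then w else w + 1)
      = (2*r+1)*w + 2*r := by
    have : ∀ s ∈ range (2*r+1), (if s = r then w else w + 1)
        = w + (if s = r then 0 else 1) := by
      intro s _; split <;> omega
    rw [Finset.sum_congr rfl this, Finset.sum_add_distrib, Finset.sum_const,
      card_range, smul_eq_mul]
    have h2 : ∑ s ∈ range (2*r+1), (if s = r then 0 else 1)
        = ((range (2*r+1)).filter (fun s => ¬ s = r)).card := by
      rw [Finset.card_filter]
      apply Finset.sum_congr rfl
      intro s _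
      by_cases h : s = r <;> simp [h]
    rw [h2]
    have h3 : (range (2*r+1)).filter (fun s => ¬ s = r) = (range (2*r+1)).erase r := by
      ext a; simp [mem_erase, and_comm]
    rw [h3, Finset.card_erase_of_mem (mem_range.mpr (by omega)), card_range]
    have : (2*r+1)*w = w*(2*r+1) := Nat.mul_comm _ _
    omega
  have := Finset.sum_le_sum hbound
  omega

end Lower

/-- even-p construction -/
def Pe (r c : ℕ) : Prop :=
  (c % (2*r+1) < r ∧ (c/(2*r+1)) % 2 = 1) ∨
  (r ≤ c % (2*r+1) ∧ c % (2*r+1) < 2*r ∧ (c/(2*r+1)) % 2 = 0) ∨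
  (c % (2*r+1) = 2*r ∧ ((c/(2*r+1)) % 2 = 1 ∨ c/(2*r+1) = 0))

/-- odd-p construction -/
def Po (r c : ℕ) : Prop :=
  (¬ c % (2*r+1) = r ∧ (c/(2*r+1)) % 2 = 0) ∨
  (c % (2*r+1) = r ∧ (c/(2*r+1)) % 2 = 1)

lemma md (r q t : ℕ) (ht : t < 2*r+1) :
    (q*(2*r+1) + t) % (2*r+1) = t ∧ (q*(2*r+1) + t) / (2*r+1) = q := by
  constructor
  · rw [Nat.mul_comm q, Nat.mul_add_mod, Nat.mod_eq_of_lt ht]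
  · rw [Nat.mul_comm, Nat.mul_add_div (by omega), Nat.div_eq_of_lt ht, Nat.add_zero]

lemma n1_decomp (r p : ℕ) (hp : 1 ≤ p) :
    (2*r+1)*p - 1 = (p-1)*(2*r+1) + 2*r := by
  cases p with
  | zero => omega
  | succ q => simp only [Nat.add_sub_cancel]; have : (2*r+1)*(q+1) = q*(2*r+1)+2*r+1 := by ring
              omega

lemma e1_decomp (r p : ℕ) (hp : 1 ≤ p) :
    (p-1)*(2*r+1) + (2*r+1) = (2*r+1)*p := by
  cases p with
  | zero => omega
  | succ q => simp only [Nat.add_sub_cancel]; ring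

section Even
variable {r p : ℕ} (hr : 1 ≤ r) (hp2 : 2 ≤ p) (hpe : Even p)

include hr hp2 hpe in
lemma Pe_S1 (x : Fin ((2*r+1)*p)) :
    ∃ c : Fin ((2*r+1)*p), Pe r c.val ∧ (x.val - c.val) + (c.val - x.val) ≤ r := by
  have hn : 2*(2*r+1) ≤ (2*r+1)*p := by
    calc 2*(2*r+1) = (2*r+1)*2 := by ring
    _ ≤ (2*r+1)*p := Nat.mul_le_mul_left _ hp2
  by_cases hxl : x.val ≤ r
  · refine ⟨⟨r, by omega⟩, ?_, ?_⟩
    · show Pe r r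
      unfold Pe
      rw [Nat.mod_eq_of_lt (by omega), Nat.div_eq_of_lt (by omega)]
      omega
    · show (x.val - r) + (r - x.val) ≤ r
      omega
  · by_cases hxr : (2*r+1)*p ≤ x.val + r + 1
    · have hx := x.isLt
      refine ⟨⟨(2*r+1)*p - 1, by omega⟩, ?_, ?_⟩
      · show Pe r ((2*r+1)*p - 1)
        unfold Pe
        rw [n1_decomp r p (by omega), (md r (p-1) (2*r) (by omega)).1,
          (md r (p-1) (2*r) (by omega)).2]
        have : Odd (p-1) := Nat.Even.sub_odd (by omega) hpe (by norm_num)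
        obtain ⟨k, hk⟩ := this
        omega
      · show (x.val - ((2*r+1)*p - 1)) + (((2*r+1)*p - 1) - x.val) ≤ r
        omega
    · -- interior
      set w := x.val - r with hw
      have hw1 : 1 ≤ w := by omega
      have hwr : w + 2*r + 1 ≤ (2*r+1)*p := by omega
      set q := w / (2*r+1) with hq
      set t := w % (2*r+1) with htdef
      have ht : t < 2*r+1 := Nat.mod_lt _ (by omega)
      have e : w = q*(2*r+1) + t := by
        rw [hq, htdef, Nat.mul_comm]; exact (Nat.div_add_mod w (2*r+1)).symm
      by_cases hq2 : q % 2 = 1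
      · refine ⟨⟨q*(2*r+1) + 2*r, by omega⟩, ?_, ?_⟩
        · show Pe r (q*(2*r+1) + 2*r)
          unfold Pe
          rw [(md r q (2*r) (by omega)).1, (md r q (2*r) (by omega)).2]
          omega
        · show (x.val - (q*(2*r+1) + 2*r)) + ((q*(2*r+1) + 2*r) - x.val) ≤ r
          omega
      · by_cases ht1 : t ≤ r
        · refine ⟨⟨q*(2*r+1) + r, by omega⟩, ?_, ?_⟩
          · show Pe r (q*(2*r+1) + r)
            unfold Pe
            rw [(md r q r (by omega)).1, (md r q r (by omega)).2]
            omega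
          · show (x.val - (q*(2*r+1) + r)) + ((q*(2*r+1) + r) - x.val) ≤ r
            omega
        · by_cases ht2 : t < 2*r
          · refine ⟨⟨q*(2*r+1) + t, by omega⟩, ?_, ?_⟩
            · show Pe r (q*(2*r+1) + t)
              unfold Pe
              rw [(md r q t (by omega)).1, (md r q t (by omega)).2]
              omega
            · show (x.val - (q*(2*r+1) + t)) + ((q*(2*r+1) + t) - x.val) ≤ r
              omega
          · -- t = 2r
            have e2 : (q+1)*(2*r+1) = q*(2*r+1) + (2*r+1) := by ring
            refine ⟨⟨(q+1)*(2*r+1), by omega⟩, ?_, ?_⟩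
            · show Pe r ((q+1)*(2*r+1))
              unfold Pe
              have := md r (q+1) 0 (by omega)
              rw [Nat.add_zero] at this
              rw [this.1, this.2]
              omega
            · show (x.val - ((q+1)*(2*r+1))) + (((q+1)*(2*r+1)) - x.val) ≤ r
              omega

include hr in
lemma Pe_S2 (j : ℕ) : Pe r j ∨ Pe r (j + (2*r+1)) := by
  have h1 : (j + (2*r+1)) % (2*r+1) = j % (2*r+1) := Nat.add_mod_right _ _
  have h2 : (j + (2*r+1)) / (2*r+1) = j / (2*r+1) + 1 := Nat.add_div_right _ (by omega)
  have h3 : j % (2*r+1) < 2*r+1 := Nat.mod_lt _ (by omega)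
  unfold Pe
  rw [h1, h2]
  omega

include hr in
lemma Pe_S3a {s : ℕ} (h1 : r+1 ≤ s) (h2 : s ≤ 2*r) : Pe r s := by
  unfold Pe
  rw [Nat.mod_eq_of_lt (by omega), Nat.div_eq_of_lt (by omega)]
  omega

include hr hp2 hpe in
lemma Pe_S3b {s : ℕ} (h1 : (2*r+1)*p - (2*r+1) ≤ s) (h2 : s + r + 2 ≤ (2*r+1)*p) : Pe r s := by
  have e1 := e1_decomp r p (by omega)
  set t := s - (p-1)*(2*r+1) with htd
  have hts : s = (p-1)*(2*r+1) + t := by omega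
  have htb : t < r := by omega
  unfold Pe
  rw [hts, (md r (p-1) t (by omega)).1, (md r (p-1) t (by omega)).2]
  obtain ⟨k, hk⟩ := Nat.Even.sub_odd (by omega) hpe (by norm_num : Odd 1)
  omega

include hr in
lemma Pe_S4 : Pe r (2*r) := by
  unfold Pe
  rw [Nat.mod_eq_of_lt (by omega), Nat.div_eq_of_lt (by omega)]
  omega

end Even

section OddC
variable {r p : ℕ} (hr : 1 ≤ r) (hp : 1 ≤ p) (hpo : Odd p)

include hr hp hpo in
lemma Po_S1 (x : Fin ((2*r+1)*p)) :
    ∃ c : Fin ((2*r+1)*p), Po r c.val ∧ (x.val - c.val) + (c.val - x.val) ≤ r := by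
  have hn : 2*r+1 ≤ (2*r+1)*p := Nat.le_mul_of_pos_right _ (by omega)
  by_cases hxl : x.val ≤ r
  · refine ⟨⟨0, by omega⟩, ?_, ?_⟩
    · show Po r 0
      unfold Po
      rw [Nat.zero_mod, Nat.zero_div]
      omega
    · show (x.val - 0) + (0 - x.val) ≤ r
      omega
  · by_cases hxr : (2*r+1)*p ≤ x.val + r + 1
    · have hx := x.isLt
      obtain ⟨k, hk⟩ := hpo
      refine ⟨⟨(2*r+1)*p - 1, by omega⟩, ?_, ?_⟩
      · show Po r ((2*r+1)*p - 1)
        unfold Po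
        rw [n1_decomp r p (by omega), (md r (p-1) (2*r) (by omega)).1,
          (md r (p-1) (2*r) (by omega)).2]
        omega
      · show (x.val - ((2*r+1)*p - 1)) + (((2*r+1)*p - 1) - x.val) ≤ r
        omega
    · -- interior
      set w := x.val - r with hw
      have hw1 : 1 ≤ w := by omega
      have hwr : w + 2*r + 1 ≤ (2*r+1)*p := by omega
      set q := w / (2*r+1) with hq
      set t := w % (2*r+1) with htdef
      have ht : t < 2*r+1 := Nat.mod_lt _ (by omega)
      have e : w = q*(2*r+1) + t := by
        rw [hq, htdef, Nat.mul_comm]; exact (Nat.div_add_mod w (2*r+1)).symm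
      by_cases hq2 : q % 2 = 0
      · by_cases ht1 : t = r
        · refine ⟨⟨q*(2*r+1) + (r+1), by omega⟩, ?_, ?_⟩
          · show Po r (q*(2*r+1) + (r+1))
            unfold Po
            rw [(md r q (r+1) (by omega)).1, (md r q (r+1) (by omega)).2]
            omega
          · show (x.val - (q*(2*r+1) + (r+1))) + ((q*(2*r+1) + (r+1)) - x.val) ≤ r
            omega
        · refine ⟨⟨q*(2*r+1) + t, by omega⟩, ?_, ?_⟩
          · show Po r (q*(2*r+1) + t)
            unfold Po
            rw [(md r q t (by omega)).1, (md r q t (by omega)).2]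
            omega
          · show (x.val - (q*(2*r+1) + t)) + ((q*(2*r+1) + t) - x.val) ≤ r
            omega
      · by_cases ht1 : t = 0
        · refine ⟨⟨q*(2*r+1) + r, by omega⟩, ?_, ?_⟩
          · show Po r (q*(2*r+1) + r)
            unfold Po
            rw [(md r q r (by omega)).1, (md r q r (by omega)).2]
            omega
          · show (x.val - (q*(2*r+1) + r)) + ((q*(2*r+1) + r) - x.val) ≤ r
            omega
        · have e2 : (q+1)*(2*r+1) = q*(2*r+1) + (2*r+1) := by ring
          refine ⟨⟨(q+1)*(2*r+1), by omega⟩, ?_, ?_⟩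
          · show Po r ((q+1)*(2*r+1))
            unfold Po
            have := md r (q+1) 0 (by omega)
            rw [Nat.add_zero] at this
            rw [this.1, this.2]
            omega
          · show (x.val - ((q+1)*(2*r+1))) + (((q+1)*(2*r+1)) - x.val) ≤ r
            omega

include hr in
lemma Po_S2 (j : ℕ) : Po r j ∨ Po r (j + (2*r+1)) := by
  have h1 : (j + (2*r+1)) % (2*r+1) = j % (2*r+1) := Nat.add_mod_right _ _
  have h2 : (j + (2*r+1)) / (2*r+1) = j / (2*r+1) + 1 := Nat.add_div_right _ (by omega)
  unfold Po
  rw [h1, h2]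
  omega

include hr in
lemma Po_S3a {s : ℕ} (h1 : r+1 ≤ s) (h2 : s ≤ 2*r) : Po r s := by
  unfold Po
  rw [Nat.mod_eq_of_lt (by omega), Nat.div_eq_of_lt (by omega)]
  omega

include hr hp hpo in
lemma Po_S3b {s : ℕ} (h1 : (2*r+1)*p - (2*r+1) ≤ s) (h2 : s + r + 2 ≤ (2*r+1)*p) : Po r s := by
  have e1 := e1_decomp r p (by omega)
  set t := s - (p-1)*(2*r+1) with htd
  have hts : s = (p-1)*(2*r+1) + t := by omega
  have htb : t < r := by omega
  obtain ⟨k, hk⟩ := hpo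
  unfold Po
  rw [hts, (md r (p-1) t (by omega)).1, (md r (p-1) t (by omega)).2]
  omega

include hr in
lemma Po_S4 : Po r (2*r) := by
  unfold Po
  rw [Nat.mod_eq_of_lt (by omega), Nat.div_eq_of_lt (by omega)]
  omega

end OddC

lemma card_odds (p : ℕ) : ((range p).filter (fun i => i % 2 = 1)).card = p/2 := by
  induction p with
  | zero => simp
  | succ n ih =>
    rw [range_add_one, filter_insert]
    split
    · rw [card_insert_of_notMem (by simp)]; omega
    · omega

lemma card_evens (p : ℕ) : ((range p).filter (fun i => i % 2 = 0)).card = p - p/2 := by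
  induction p with
  | zero => simp
  | succ n ih =>
    rw [range_add_one, filter_insert]
    split
    · rw [card_insert_of_notMem (by simp)]; omega
    · omega

lemma ncard_filter (n : ℕ) (P : ℕ → Prop) :
    Set.ncard {x : Fin n | P x.val} = ((range n).filter P).card := by
  classical
  rw [Set.ncard_eq_toFinset_card']
  apply Finset.card_bij (fun a _ => a.val)
  · intro a ha
    rw [Set.mem_toFinset, Set.mem_setOf_eq] at ha
    exact mem_filter.mpr ⟨mem_range.mpr a.isLt, ha⟩
  · intro a _ b _ h
    exact Fin.ext h
  · intro b hb
    rw [mem_filter, mem_range] at hb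
    exact ⟨⟨b, hb.1⟩, by rw [Set.mem_toFinset, Set.mem_setOf_eq]; exact hb.2, rfl⟩

lemma pos_bound {r p s i : ℕ} (hs : s < 2*r+1) (hi : i < p) :
    s + i*(2*r+1) < (2*r+1)*p := by
  have e : (i+1)*(2*r+1) = i*(2*r+1) + (2*r+1) := by ring
  have h := Nat.mul_le_mul_right (2*r+1) (show i+1 ≤ p by omega)
  have h2 : p*(2*r+1) = (2*r+1)*p := Nat.mul_comm _ _
  omega

lemma sum_ite_card (m0 r0 A : ℕ) (h : r0 < m0) :
    ∑ s ∈ range m0, (if s = r0 then A else A + 1) = m0 * A + (m0 - 1) := by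
  have key : ∑ s ∈ range m0, ((if s = r0 then A else A + 1) + (if s = r0 then 1 else 0))
      = ∑ s ∈ range m0, (A + 1) := by
    apply Finset.sum_congr rfl
    intro s _; split <;> omega
  rw [Finset.sum_add_distrib, Finset.sum_ite_eq' (range m0) r0 (fun _ => 1),
    if_pos (mem_range.mpr h), Finset.sum_const, card_range, smul_eq_mul] at key
  have : m0 * (A + 1) = m0 * A + m0 := by ring
  omega

lemma sum_ite_card' (m0 r0 A : ℕ) (h : r0 < m0) :
    ∑ s ∈ range m0, (if s = r0 then A + 1 else A) = m0 * A + 1 := by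
  have key : ∑ s ∈ range m0, (if s = r0 then A + 1 else A)
      = ∑ s ∈ range m0, (A + (if s = r0 then 1 else 0)) := by
    apply Finset.sum_congr rfl
    intro s _; split <;> omega
  rw [key, Finset.sum_add_distrib, Finset.sum_ite_eq' (range m0) r0 (fun _ => 1),
    if_pos (mem_range.mpr h), Finset.sum_const, card_range, smul_eq_mul]

section CardE
variable {r p : ℕ}

lemma card_Pe (hr : 1 ≤ r) (hp2 : 2 ≤ p) (hpe : Even p) :
    Set.ncard {x : Fin ((2*r+1)*p) | Pe r x.val} = (2*r+1)*p/2 + 1 := by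
  classical
  obtain ⟨u, hu⟩ := hpe
  have hu1 : 1 ≤ u := by omega
  rw [ncard_filter]
  set S := (range ((2*r+1)*p)).filter (Pe r) with hSdef
  have hSmem : ∀ c, c < (2*r+1)*p → (c ∈ S ↔ Pe r c) := by
    intro c hc
    rw [hSdef, mem_filter, mem_range]
    exact ⟨fun h => h.2, fun h => ⟨hc, h⟩⟩
  rw [part_card (by omega : 0 < 2*r+1) S (by rw [hSdef]; exact filter_subset _ _)]
  have hcards : ∀ s ∈ range (2*r+1),
      ((range p).filter (fun i => s + i*(2*r+1) ∈ S)).card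
        = (if s = 2*r then u + 1 else u) := by
    intro s hs
    have hsm := mem_range.mp hs
    have hmod : ∀ i:ℕ, (s + i*(2*r+1)) % (2*r+1) = s := by
      intro i; rw [Nat.add_mul_mod_self_right, Nat.mod_eq_of_lt hsm]
    have hdiv : ∀ i:ℕ, (s + i*(2*r+1)) / (2*r+1) = i := by
      intro i; rw [Nat.add_mul_div_right _ _ (by omega : 0 < 2*r+1), Nat.div_eq_of_lt hsm]; omega
    have hT : (range p).filter (fun i => s + i*(2*r+1) ∈ S)
        = (range p).filter (fun i => Pe r (s + i*(2*r+1))) := by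
      apply filter_congr
      intro i hi
      exact hSmem _ (pos_bound hsm (mem_range.mp hi))
    rw [hT]
    by_cases hs1 : s < r
    · have : (range p).filter (fun i => Pe r (s + i*(2*r+1)))
          = (range p).filter (fun i => i % 2 = 1) := by
        apply filter_congr
        intro i _
        unfold Pe
        rw [hmod i, hdiv i]
        constructor
        · intro h; omega
        · intro h; omega
      rw [this, card_odds, if_neg (by omega)]
      omega
    · by_cases hs2 : s < 2*r
      · have : (range p).filter (fun i => Pe r (s + i*(2*r+1)))
            = (range p).filter (fun i => i % 2 = 0) := by
          apply filter_congr
          intro i _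
          unfold Pe
          rw [hmod i, hdiv i]
          constructor
          · intro h; omega
          · intro h; omega
        rw [this, card_evens, if_neg (by omega)]
        omega
      · have hs3 : s = 2*r := by omega
        have : (range p).filter (fun i => Pe r (s + i*(2*r+1)))
            = insert 0 ((range p).filter (fun i => i % 2 = 1)) := by
          ext a
          simp only [mem_insert, mem_filter, mem_range]
          unfold Pe
          rw [hmod a, hdiv a]
          constructor
          · intro h; omega
          · intro h; omega
        rw [this, card_insert_of_notMem (by simp), card_odds, if_pos hs3]
        omega
  rw [Finset.sum_congr rfl hcards, sum_ite_card' (2*r+1) (2*r) u (by omega)]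
  have hg : (2*r+1)*p = ((2*r+1)*u)*2 := by rw [hu]; ring
  rw [hg, Nat.mul_div_cancel _ (by norm_num)]

lemma card_Po (hr : 1 ≤ r) (hp : 1 ≤ p) (hpo : Odd p) :
    Set.ncard {x : Fin ((2*r+1)*p) | Po r x.val} = (2*r+1)*(p-1)/2 + 2*r := by
  classical
  obtain ⟨w, hw⟩ := hpo
  rw [ncard_filter]
  set S := (range ((2*r+1)*p)).filter (Po r) with hSdef
  have hSmem : ∀ c, c < (2*r+1)*p → (c ∈ S ↔ Po r c) := by
    intro c hc
    rw [hSdef, mem_filter, mem_range]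
    exact ⟨fun h => h.2, fun h => ⟨hc, h⟩⟩
  rw [part_card (by omega : 0 < 2*r+1) S (by rw [hSdef]; exact filter_subset _ _)]
  have hcards : ∀ s ∈ range (2*r+1),
      ((range p).filter (fun i => s + i*(2*r+1) ∈ S)).card
        = (if s = r then w else w + 1) := by
    intro s hs
    have hsm := mem_range.mp hs
    have hmod : ∀ i:ℕ, (s + i*(2*r+1)) % (2*r+1) = s := by
      intro i; rw [Nat.add_mul_mod_self_right, Nat.mod_eq_of_lt hsm]
    have hdiv : ∀ i:ℕ, (s + i*(2*r+1)) / (2*r+1) = i := by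
      intro i; rw [Nat.add_mul_div_right _ _ (by omega : 0 < 2*r+1), Nat.div_eq_of_lt hsm]; omega
    have hT : (range p).filter (fun i => s + i*(2*r+1) ∈ S)
        = (range p).filter (fun i => Po r (s + i*(2*r+1))) := by
      apply filter_congr
      intro i hi
      exact hSmem _ (pos_bound hsm (mem_range.mp hi))
    rw [hT]
    by_cases hs1 : s = r
    · have : (range p).filter (fun i => Po r (s + i*(2*r+1)))
          = (range p).filter (fun i => i % 2 = 1) := by
        apply filter_congr
        intro i _
        unfold Po
        rw [hmod i, hdiv i]
        constructor
        · intro h; omega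
        · intro h; omega
      rw [this, card_odds, if_pos hs1]
      omega
    · have : (range p).filter (fun i => Po r (s + i*(2*r+1)))
          = (range p).filter (fun i => i % 2 = 0) := by
        apply filter_congr
        intro i _
        unfold Po
        rw [hmod i, hdiv i]
        constructor
        · intro h; omega
        · intro h; omega
      rw [this, card_evens, if_neg hs1]
      omega
  rw [Finset.sum_congr rfl hcards, sum_ite_card (2*r+1) r w (by omega)]
  have hg : (2*r+1)*(p-1) = ((2*r+1)*w)*2 := by
    rw [show p - 1 = 2*w by omega]; ring
  rw [hg, Nat.mul_div_cancel _ (by norm_num)]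
  omega
end CardE

end Helpers

theorem stmt12 (r p : ℕ) (hr : 1 ≤ r) (hp : 1 ≤ p) :
    (Even p → IsLeast {m | ∃ D : Set (Fin ((2*r+1)*p)),
        IsIdCode (SimpleGraph.pathGraph ((2*r+1)*p)) r D ∧ D.ncard = m}
      ((2*r+1)*p/2 + 1)) ∧
    (Odd p → IsLeast {m | ∃ D : Set (Fin ((2*r+1)*p)),
        IsIdCode (SimpleGraph.pathGraph ((2*r+1)*p)) r D ∧ D.ncard = m}
      ((2*r+1)*(p-1)/2 + 2*r)) := by
  have hn : 2*r+1 ≤ (2*r+1)*p := Nat.le_mul_of_pos_right _ (by omega)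
  constructor
  · intro hpe
    have hp2 : 2 ≤ p := by obtain ⟨u, hu⟩ := hpe; omega
    have hn2 : 2*(2*r+1) ≤ (2*r+1)*p := by
      calc 2*(2*r+1) = (2*r+1)*2 := by ring
      _ ≤ (2*r+1)*p := Nat.mul_le_mul_left _ hp2
    constructor
    · refine ⟨{x : Fin ((2*r+1)*p) | Pe r x.val}, ?_, card_Pe hr hp2 hpe⟩
      apply suffic hr hn
      · intro x
        obtain ⟨c, hc1, hc2⟩ := Pe_S1 hr hp2 hpe x
        exact ⟨c, hc1, hc2⟩
      · intro j hj
        rcases Pe_S2 hr j with h | h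
        · exact Or.inl ⟨⟨j, by omega⟩, h, rfl⟩
        · exact Or.inr ⟨⟨j + (2*r+1), by omega⟩, h, rfl⟩
      · intro s hs
        rcases hs with ⟨h1, h2⟩ | ⟨h1, h2⟩
        · exact ⟨⟨s, by omega⟩, Pe_S3a hr h1 h2, rfl⟩
        · exact ⟨⟨s, by omega⟩, Pe_S3b hr hp2 hpe h1 h2, rfl⟩
      · exact ⟨⟨2*r, by omega⟩, Pe_S4 hr, rfl⟩
    · rintro mm ⟨D, hD, rfl⟩
      exact lower_even hr hp hD hpe
  · intro hpo
    constructor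
    · refine ⟨{x : Fin ((2*r+1)*p) | Po r x.val}, ?_, card_Po hr hp hpo⟩
      apply suffic hr hn
      · intro x
        obtain ⟨c, hc1, hc2⟩ := Po_S1 hr hp hpo x
        exact ⟨c, hc1, hc2⟩
      · intro j hj
        rcases Po_S2 hr j with h | h
        · exact Or.inl ⟨⟨j, by omega⟩, h, rfl⟩
        · exact Or.inr ⟨⟨j + (2*r+1), by omega⟩, h, rfl⟩
      · intro s hs
        rcases hs with ⟨h1, h2⟩ | ⟨h1, h2⟩
        · exact ⟨⟨s, by omega⟩, Po_S3a hr h1 h2, rfl⟩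
        · exact ⟨⟨s, by omega⟩, Po_S3b hr hp hpo h1 h2, rfl⟩
      · exact ⟨⟨2*r, by omega⟩, Po_S4 hr, rfl⟩
    · rintro mm ⟨D, hD, rfl⟩
      exact lower_odd hr hp hD hpo
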